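/- The rank-4 Hermitian lattice over Z[√−1] defined by Iyanaga's matrix A = (1/2)·[[2, −i, −i, 1],[i, 2, 1, i],[i, 1, 2, 1],[1, −i, 1, 2]] (i = √−1) has an even unimodular positive definite trace form of rank 8; consequently, this trace lattice is isometric to E8. -/

import Mathlib

noncomputable section
open Complex Matrix

/-- Iyanaga's matrix: the Gram matrix of a rank-4 Hermitian lattice over `ℤ[√−1]`. -/
def A16 : Matrix (Fin 4) (Fin 4) ℂ :=
  (1/2 : ℂ) • !![2, -I, -I, 1; I, 2, 1, I; I, 1, 2, 1; 1, -I, 1, 2]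

/-- The Hermitian form `⟨x,y⟩ = xᵀ A ȳ` on `ℤ[i]⁴`. -/
def herm16 (x y : Fin 4 → ℂ) : ℂ := ∑ j, ∑ k, x j * A16 j k * starRingEnd ℂ (y k)

/-- `ℤ`-basis `e₁, i·e₁, e₂, i·e₂, e₃, i·e₃, e₄, i·e₄` of the underlying `ℤ`-module. -/
def bas16 : Fin 8 → Fin 4 → ℂ :=
  ![![1,0,0,0], ![I,0,0,0], ![0,1,0,0], ![0,I,0,0],
    ![0,0,1,0], ![0,0,I,0], ![0,0,0,1], ![0,0,0,I]]

/-- Gram matrix of the trace form `(x,y) = Tr_{F/ℚ}⟨x,y⟩` on the underlying `ℤ^8`. -/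
def T16 : Matrix (Fin 8) (Fin 8) ℂ := fun j k =>
  herm16 (bas16 j) (bas16 k) + starRingEnd ℂ (herm16 (bas16 j) (bas16 k))

/-- A Gram matrix of the `E₈` root lattice. -/
def E8Mat : Matrix (Fin 8) (Fin 8) ℤ :=
  !![2, 0, -1, 0, 0, 0, 0, 0;
     0, 2, 0, -1, 0, 0, 0, 0;
     -1, 0, 2, -1, 0, 0, 0, 0;
     0, -1, -1, 2, -1, 0, 0, 0;
     0, 0, 0, -1, 2, -1, 0, 0;
     0, 0, 0, 0, -1, 2, -1, 0;
     0, 0, 0, 0, 0, -1, 2, -1;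
     0, 0, 0, 0, 0, 0, -1, 2]

/-- The integer matrix of the trace form in the basis `bas16`. -/
def Tint : Matrix (Fin 8) (Fin 8) ℤ :=
  !![2, 0, 0, -1, 0, -1, 1, 0;
     0, 2, 1, 0, 1, 0, 0, 1;
     0, 1, 2, 0, 1, 0, 0, 1;
     -1, 0, 0, 2, 0, 1, -1, 0;
     0, 1, 1, 0, 2, 0, 1, 0;
     -1, 0, 0, 1, 0, 2, 0, 1;
     1, 0, 0, -1, 1, 0, 2, 0;
     0, 1, 1, 0, 0, 1, 0, 2]

/-- Base change matrix carrying `Tint` to `E8Mat`. -/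
def Pmat : Matrix (Fin 8) (Fin 8) ℤ :=
  !![-2, 0, 1, 0, 0, 0, 0, 0;
     0, -2, 0, 1, 0, 0, 0, 0;
     0, -1, -1, 1, 0, 0, 0, 0;
     1, 0, -1, 0, 0, 0, 1, 0;
     -1, 2, 1, -1, 0, 0, -1, 1;
     -2, -1, 1, 0, 1, 0, -1, 0;
     2, -1, -2, 1, 0, 0, 1, -1;
     1, 2, 0, -1, -1, 1, 0, 0]

/-- Inverse of `Pmat`. -/
def Qmat : Matrix (Fin 8) (Fin 8) ℤ :=
  !![0, 1, -1, 0, 1, 0, 1, 0;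
     1, 1, -1, 0, 2, 0, 2, 0;
     1, 2, -2, 0, 2, 0, 2, 0;
     2, 3, -2, 0, 4, 0, 4, 0;
     1, 2, -2, 1, 3, 1, 3, 0;
     1, 2, -1, 1, 2, 1, 2, 1;
     1, 1, -1, 1, 1, 0, 1, 0;
     0, 1, 0, 1, 1, 0, 0, 0]

/-- A matrix with `Mmatᵀ * Mmat = 4 • Tint` (columns are doubled `E₈` root vectors). -/
def Mmat : Matrix (Fin 8) (Fin 8) ℤ :=
  !![2, 2, 1, -1, 1, -1, 1, 1;
     2, -2, -1, -1, -1, -1, 1, -1;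
     0, 0, 1, 1, 1, 1, 1, 1;
     0, 0, 1, 1, 1, -1, -1, -1;
     0, 0, 1, 1, -1, 1, -1, 1;
     0, 0, 1, -1, 1, 1, 1, 1;
     0, 0, 1, -1, 1, -1, 1, -1;
     0, 0, -1, 1, 1, 1, 1, -1]

/-- `Nmat * Mmat = 256 • 1`. -/
def Nmat : Matrix (Fin 8) (Fin 8) ℤ :=
  !![64, 64, -64, 64, 64, 64, -64, 64;
     64, -64, -64, -64, 64, -64, 64, 64;
     0, 0, 0, 0, 128, 0, 128, 0;
     0, 0, 128, 0, 0, -128, 0, 0;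
     0, 0, 0, 128, -128, 128, -128, 0;
     0, 0, -128, 0, 128, 128, 0, 128;
     0, 0, 128, -128, 0, -128, 128, 0;
     0, 0, 128, 0, -128, 0, -128, -128]

lemma hA16 : ∀ j k, A16 j k
    = (1/2 : ℂ) * !![2, -I, -I, 1; I, 2, 1, I; I, 1, 2, 1; 1, -I, 1, 2] j k := by
  intro j k; simp [A16]

lemma bas16_mk0 (h : (0:ℕ) < 8) : bas16 ⟨0, h⟩ = ![1,0,0,0] := rfl
lemma bas16_mk1 (h : (1:ℕ) < 8) : bas16 ⟨1, h⟩ = ![I,0,0,0] := rfl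
lemma bas16_mk2 (h : (2:ℕ) < 8) : bas16 ⟨2, h⟩ = ![0,1,0,0] := rfl
lemma bas16_mk3 (h : (3:ℕ) < 8) : bas16 ⟨3, h⟩ = ![0,I,0,0] := rfl
lemma bas16_mk4 (h : (4:ℕ) < 8) : bas16 ⟨4, h⟩ = ![0,0,1,0] := rfl
lemma bas16_mk5 (h : (5:ℕ) < 8) : bas16 ⟨5, h⟩ = ![0,0,I,0] := rfl
lemma bas16_mk6 (h : (6:ℕ) < 8) : bas16 ⟨6, h⟩ = ![0,0,0,1] := rfl
lemma bas16_mk7 (h : (7:ℕ) < 8) : bas16 ⟨7, h⟩ = ![0,0,0,I] := rfl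

lemma bas16_n0 : bas16 0 = ![1,0,0,0] := rfl
lemma bas16_n1 : bas16 1 = ![I,0,0,0] := rfl
lemma bas16_n2 : bas16 2 = ![0,1,0,0] := rfl
lemma bas16_n3 : bas16 3 = ![0,I,0,0] := rfl
lemma bas16_n4 : bas16 4 = ![0,0,1,0] := rfl
lemma bas16_n5 : bas16 5 = ![0,0,I,0] := rfl
lemma bas16_n6 : bas16 6 = ![0,0,0,1] := rfl
lemma bas16_n7 : bas16 7 = ![0,0,0,I] := rfl

set_option maxHeartbeats 3000000 in
/-- The trace form matrix coincides with the explicit integer matrix. -/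
lemma hT : T16 = Tint.map (Int.cast : ℤ → ℂ) := by
  ext j k
  fin_cases j <;> fin_cases k <;>
    norm_num [T16, herm16, Fin.sum_univ_four, hA16, Tint, Matrix.map_apply,
      bas16_n0, bas16_n1, bas16_n2, bas16_n3, bas16_n4, bas16_n5, bas16_n6, bas16_n7, bas16_mk0, bas16_mk1, bas16_mk2, bas16_mk3, bas16_mk4, bas16_mk5, bas16_mk6, bas16_mk7, Matrix.cons_val_zero, Matrix.cons_val_one, Matrix.head_cons, Matrix.cons_val_two, Matrix.cons_val_three, Matrix.tail_cons,
      Complex.ext_iff]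

lemma hPTP : Pmatᵀ * Tint * Pmat = E8Mat := by decide

lemma hQP : Qmat * Pmat = 1 := by decide

/-- Integer inverse of `Tint` (left inverse witness). -/
def Sint : Matrix (Fin 8) (Fin 8) ℤ := !![2, 0, 0, -1, 1, 2, -2, -1;
     0, 2, 1, 0, -2, 1, 1, -2;
     0, 1, 2, 0, -2, 1, 1, -2;
     -1, 0, 0, 2, -1, -2, 2, 1;
     1, -2, -2, -1, 4, 0, -3, 2;
     2, 1, 1, -2, 0, 4, -2, -3;
     -2, 1, 1, 2, -3, -2, 4, 0;
     -1, -2, -2, 1, 2, -3, 0, 4]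

lemma hST : Sint * Tint = 1 := by decide

lemma hMM : Mmatᵀ * Mmat = (4 : ℤ) • Tint := by decide

lemma hNM : Nmat * Mmat = (256 : ℤ) • 1 := by decide

lemma mapInt_mul {α : Type} [CommRing α] (M N : Matrix (Fin 8) (Fin 8) ℤ) :
    (M * N).map (Int.cast : ℤ → α) = M.map Int.cast * N.map Int.cast := by
  ext a b
  simp only [Matrix.mul_apply, Matrix.map_apply]
  push_cast
  rfl


lemma part1 : ∀ j k : Fin 8, T16 j k = ((Tint j k : ℤ) : ℂ) := by
  intro j k; rw [hT]; rfl

lemma part2 : ∀ j : Fin 8, ∃ m : ℤ, T16 j j = (2 * m : ℤ) := by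
  intro j
  refine ⟨1, ?_⟩
  rw [part1 j j]
  fin_cases j <;> norm_num [Tint]

lemma part3 : T16.det = 1 ∨ T16.det = -1 := by
  have hdet : T16.det = ((Tint.det : ℤ) : ℂ) := by
    rw [hT]
    rw [show (Int.cast : ℤ → ℂ) = ⇑(Int.castRingHom ℂ) from (Int.coe_castRingHom (α := ℂ)).symm]
    rw [← RingHom.mapMatrix_apply, ← RingHom.map_det]
  have hu : IsUnit Tint.det := Matrix.isUnit_det_of_left_inverse hST
  rcases Int.isUnit_iff.mp hu with h | h
  · left; rw [hdet, h]; norm_num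
  · right; rw [hdet, h]; norm_num

lemma part4 : ∀ v : Fin 8 → ℝ, v ≠ 0 → 0 < ∑ j, ∑ k, v j * (T16 j k).re * v k := by
  intro v hv
  set Mr : Matrix (Fin 8) (Fin 8) ℝ := Mmat.map (Int.cast : ℤ → ℝ) with hMr
  set w : Fin 8 → ℝ := Mr.mulVec v with hw
  have hMMr : ∀ j k, (∑ i, Mr i j * Mr i k) = 4 * ((Tint j k : ℤ) : ℝ) := by
    intro j k
    have h := congrFun (congrFun hMM j) k
    simp only [Matrix.mul_apply, Matrix.transpose_apply, Matrix.smul_apply,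
      smul_eq_mul] at h
    have h2 := congrArg (Int.cast : ℤ → ℝ) h
    push_cast at h2
    simpa [hMr, Matrix.map_apply] using h2
  have key : ∑ i, (w i) ^ 2 = 4 * ∑ j, ∑ k, v j * ((Tint j k : ℤ) : ℝ) * v k := by
    have hsq : ∀ i, (w i) ^ 2 = ∑ j, ∑ k, (Mr i j * v j) * (Mr i k * v k) := by
      intro i
      rw [show (w i) ^ 2 = (∑ j, Mr i j * v j) * (∑ k, Mr i k * v k) by
        simp [hw, Matrix.mulVec, dotProduct, sq]]
      rw [Finset.sum_mul_sum]
    rw [Finset.sum_congr rfl fun i _ => hsq i, Finset.sum_comm, Finset.mul_sum]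
    refine Finset.sum_congr rfl fun j _ => ?_
    rw [Finset.sum_comm, Finset.mul_sum]
    refine Finset.sum_congr rfl fun k _ => ?_
    calc ∑ i, (Mr i j * v j) * (Mr i k * v k)
        = (∑ i, Mr i j * Mr i k) * (v j * v k) := by
          rw [Finset.sum_mul]
          exact Finset.sum_congr rfl fun i _ => by ring
      _ = 4 * (v j * ((Tint j k : ℤ) : ℝ) * v k) := by rw [hMMr]; ring
  have hwne : w ≠ 0 := by
    intro h0
    apply hv
    have h1 : (Nmat.map (Int.cast : ℤ → ℝ)).mulVec w = 0 := by
      rw [h0]; simp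
    rw [hw, Matrix.mulVec_mulVec] at h1
    have h2 : Nmat.map (Int.cast : ℤ → ℝ) * Mr
        = (256 : ℝ) • (1 : Matrix (Fin 8) (Fin 8) ℝ) := by
      rw [hMr, ← mapInt_mul, hNM]
      ext a b
      simp only [Matrix.map_apply, Matrix.smul_apply, Matrix.one_apply, smul_eq_mul]
      split <;> norm_num
    rw [h2, Matrix.smul_mulVec, Matrix.one_mulVec] at h1
    have h3 := smul_eq_zero.mp h1
    simpa using h3
  obtain ⟨i0, hi0⟩ := Function.ne_iff.mp hwne
  have hpos : 0 < ∑ i, (w i) ^ 2 := by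
    refine Finset.sum_pos' (fun i _ => sq_nonneg _) ⟨i0, Finset.mem_univ _, ?_⟩
    exact lt_of_le_of_ne (sq_nonneg _) (Ne.symm (pow_ne_zero 2 hi0))
  have hgt : 0 < ∑ j, ∑ k, v j * ((Tint j k : ℤ) : ℝ) * v k := by
    rw [key] at hpos; linarith
  calc (0:ℝ) < ∑ j, ∑ k, v j * ((Tint j k : ℤ) : ℝ) * v k := hgt
    _ = ∑ j, ∑ k, v j * (T16 j k).re * v k := by
        refine Finset.sum_congr rfl fun j _ => Finset.sum_congr rfl fun k _ => ?_
        rw [part1 j k]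
        simp

lemma part5 : (Pmat.map (Int.cast : ℤ → ℂ))ᵀ * T16 * Pmat.map (Int.cast : ℤ → ℂ) =
    E8Mat.map (Int.cast : ℤ → ℂ) := by
  rw [hT, show (Pmat.map (Int.cast : ℤ → ℂ))ᵀ = Pmatᵀ.map Int.cast from
    Matrix.transpose_map.symm, ← mapInt_mul, ← mapInt_mul, hPTP]

/-- The rank-4 Hermitian lattice over `ℤ[√−1]` defined by Iyanaga's matrix
`A = (1/2)·[[2,−i,−i,1],[i,2,1,i],[i,1,2,1],[1,−i,1,2]]` has an integral, even,
unimodular, positive definite trace form of rank 8; consequently this trace lattice is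
isometric to `E₈`. -/
theorem stmt_16 :
    (∀ j k, ∃ m : ℤ, T16 j k = (m : ℂ)) ∧
    (∀ j, ∃ m : ℤ, T16 j j = (2 * m : ℤ)) ∧
    (T16.det = 1 ∨ T16.det = -1) ∧
    (∀ v : Fin 8 → ℝ, v ≠ 0 → 0 < ∑ j, ∑ k, v j * (T16 j k).re * v k) ∧
    (∃ P : Matrix (Fin 8) (Fin 8) ℤ, IsUnit P.det ∧
      (P.map (Int.cast : ℤ → ℂ))ᵀ * T16 * P.map (Int.cast : ℤ → ℂ) =
        E8Mat.map (Int.cast : ℤ → ℂ)) :=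
  ⟨fun j k => ⟨Tint j k, part1 j k⟩, part2, part3, part4,
    ⟨Pmat, Matrix.isUnit_det_of_left_inverse hQP, part5⟩⟩
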